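/- Let $k$ be a field of characteristic zero, $V$ a finite-dimensional representation of $\mathfrak{sl}(2,k)$, and $W \subseteq V$ the three-dimensional irreducible submodule with basis $\{e_0,e_1,e_2\}$ adapted to an $\mathfrak{sl}(2,k)$-triple $\{E,H,F\}$ (i.e. $H(e_i)=(2-2i)e_i$, $E(e_1)=2e_0$, $E(e_2)=2e_1$, $F(e_0)=e_1$, $F(e_1)=e_2$, $E(e_0)=F(e_2)=0$). Let $P : V \times V \to \mathfrak{sl}(2,k)$ be a symmetric bilinear map satisfying relations (1) and (2) with $P(W,W) = \{0\}$. Then there exists a linear form $\gamma \in V^*$ such that for all $v \in V$: $P(v,e_0) = -\gamma(v)E$, $P(v,e_1) = \gamma(v)H$, $P(v,e_2) = 2\gamma(v)F$. -/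

import Mathlib

/-- The Lie algebra `sl(2,k)` of traceless `2 × 2` matrices. -/
abbrev sl2 (k : Type*) [Field k] : Type _ := ↥(LieAlgebra.SpecialLinear.sl (Fin 2) k)

/-- Over a field of characteristic zero, let `V` be a finite-dimensional
representation of `sl(2,k)` and `W = span{e₀,e₁,e₂} ⊆ V` the three-dimensional
irreducible submodule adapted to an `sl(2,k)`-triple `{E,H,F}`. If `P : V × V → sl(2,k)`
is symmetric bilinear, satisfies relations (1) and (2), and `P(W,W) = 0`, then there is a
linear form `γ ∈ V*` with `P(v,e₀) = -γ(v)E`, `P(v,e₁) = γ(v)H`, `P(v,e₂) = 2γ(v)F`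
for all `v ∈ V`. -/
lemma finrank_sl2 (k : Type*) [Field k] [CharZero k] : Module.finrank k (sl2 k) = 3 := by
  have hsurj : Function.Surjective (Matrix.traceLinearMap (Fin 2) k k) := by
    intro c
    exact ⟨Matrix.single 0 0 c, by simp⟩
  have h := LinearMap.finrank_range_add_finrank_ker (Matrix.traceLinearMap (Fin 2) k k)
  rw [LinearMap.range_eq_top.mpr hsurj, finrank_top] at h
  have h4 : Module.finrank k (Matrix (Fin 2) (Fin 2) k) = 4 := by
    simp [Module.finrank_matrix]
  have h1 : Module.finrank k k = 1 := Module.finrank_self k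
  have hker : Module.finrank k (LinearMap.ker (Matrix.traceLinearMap (Fin 2) k k)) = 3 := by
    omega
  exact hker

theorem stmt_12 (k V : Type*) [Field k] [CharZero k]
    [AddCommGroup V] [Module k V] [LieRingModule (sl2 k) V] [LieModule k (sl2 k) V]
    [FiniteDimensional k V]
    (E H F : sl2 k)
    (hEF : ⁅E, F⁆ = H) (hHE : ⁅H, E⁆ = (2 : k) • E) (hHF : ⁅H, F⁆ = (-2 : k) • F)
    (e0 e1 e2 : V)
    (hindep : LinearIndependent k ![e0, e1, e2])
    (hsub : ∃ W : LieSubmodule k (sl2 k) V,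
      (W : Submodule k V) = Submodule.span k {e0, e1, e2})
    (hHe0 : ⁅H, e0⁆ = (2 : k) • e0) (hHe1 : ⁅H, e1⁆ = 0) (hHe2 : ⁅H, e2⁆ = (-2 : k) • e2)
    (hEe0 : ⁅E, e0⁆ = 0) (hEe1 : ⁅E, e1⁆ = (2 : k) • e0) (hEe2 : ⁅E, e2⁆ = (2 : k) • e1)
    (hFe0 : ⁅F, e0⁆ = e1) (hFe1 : ⁅F, e1⁆ = e2) (hFe2 : ⁅F, e2⁆ = 0)
    (P : V →ₗ[k] V →ₗ[k] sl2 k) (hPsymm : ∀ u v : V, P u v = P v u)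
    (h1 : ∀ u v w : V, ⁅P u v, w⁆ + ⁅P v w, u⁆ + ⁅P w u, v⁆ = 0)
    (h2 : ∀ (x : sl2 k) (u v : V), ⁅x, P u v⁆ = P ⁅x, u⁆ v + P u ⁅x, v⁆)
    (hPWW : ∀ u ∈ Submodule.span k {e0, e1, e2}, ∀ v ∈ Submodule.span k {e0, e1, e2},
      P u v = 0) :
    ∃ γ : V →ₗ[k] k, ∀ v : V,
      P v e0 = (-(γ v)) • E ∧ P v e1 = γ v • H ∧ P v e2 = (2 * γ v) • F := by
  classical
  have htwo : ∀ t : k, 2 * t = 0 → t = 0 := by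
    intro t ht
    rcases mul_eq_zero.mp ht with h | h
    · exact absurd h two_ne_zero
    · exact h
  have hind : ∀ a b c : k, a • e0 + b • e1 + c • e2 = 0 → a = 0 ∧ b = 0 ∧ c = 0 := by
    intro a b c h
    have := Fintype.linearIndependent_iff.mp hindep ![a, b, c] (by
      simpa [Fin.sum_univ_three] using h)
    exact ⟨this 0, this 1, this 2⟩
  have hEHF : LinearIndependent k ![E, H, F] := by
    rw [Fintype.linearIndependent_iff]
    intro g hg
    have hg' : g 0 • E + g 1 • H + g 2 • F = 0 := by
      simpa [Fin.sum_univ_three] using hg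
    have h0 : (2 * g 1) • e0 + g 2 • e1 + (0 : k) • e2 = 0 := by
      have := congrArg (fun x : sl2 k => ⁅x, e0⁆) hg'
      simp only [add_lie, smul_lie, hEe0, hHe0, hFe0, zero_lie, smul_zero, smul_smul,
        zero_add, mul_comm] at this
      simpa using this
    obtain ⟨hb, hc, -⟩ := hind _ _ _ h0
    have hg1 : g 1 = 0 := htwo _ hb
    have h1' : (2 * g 0) • e0 + (0 : k) • e1 + (0 : k) • e2 = 0 := by
      have := congrArg (fun x : sl2 k => ⁅x, e1⁆) hg'
      simp only [add_lie, smul_lie, hEe1, hHe1, hFe1, zero_lie, smul_zero, smul_smul,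
        hg1, hc, zero_smul, add_zero, mul_comm] at this
      simpa using this
    obtain ⟨ha, -, -⟩ := hind _ _ _ h1'
    have hg0 : g 0 = 0 := htwo _ ha
    intro i
    fin_cases i <;> assumption
  have hcard : Fintype.card (Fin 3) = Module.finrank k (sl2 k) := by
    rw [finrank_sl2]; rfl
  let bas : Module.Basis (Fin 3) k (sl2 k) := basisOfLinearIndependentOfCardEqFinrank hEHF hcard
  have hbas : ⇑bas = ![E, H, F] := coe_basisOfLinearIndependentOfCardEqFinrank _ _
  have hbas0 : bas 0 = E := by rw [hbas]; rfl
  have hbas1 : bas 1 = H := by rw [hbas]; rfl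
  have hbas2 : bas 2 = F := by rw [hbas]; rfl
  have hdecomp : ∀ x : sl2 k,
      x = bas.repr x 0 • E + bas.repr x 1 • H + bas.repr x 2 • F := by
    intro x
    have h := bas.sum_repr x
    rw [Fin.sum_univ_three, hbas0, hbas1, hbas2] at h
    exact h.symm
  have he0 : e0 ∈ Submodule.span k ({e0, e1, e2} : Set V) :=
    Submodule.subset_span (by simp)
  have he1 : e1 ∈ Submodule.span k ({e0, e1, e2} : Set V) :=
    Submodule.subset_span (by simp)
  have he2 : e2 ∈ Submodule.span k ({e0, e1, e2} : Set V) :=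
    Submodule.subset_span (by simp)
  have br0 : ∀ a b c : k, ⁅a • E + b • H + c • F, e0⁆ = (2 * b) • e0 + c • e1 := by
    intro a b c
    simp [add_lie, smul_lie, hEe0, hHe0, hFe0, smul_smul, mul_comm]
  have br1 : ∀ a b c : k, ⁅a • E + b • H + c • F, e1⁆ = (2 * a) • e0 + c • e2 := by
    intro a b c
    simp [add_lie, smul_lie, hEe1, hHe1, hFe1, smul_smul, mul_comm]
  have br2 : ∀ a b c : k, ⁅a • E + b • H + c • F, e2⁆ = (2 * a) • e1 + ((-2) * b) • e2 := by
    intro a b c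
    simp only [add_lie, smul_lie, hEe2, hHe2, hFe2, smul_zero, add_zero, smul_smul, mul_comm]
  have hself : ∀ (v : V) (e : V), e ∈ Submodule.span k ({e0, e1, e2} : Set V) →
      ⁅P v e, e⁆ = 0 := by
    intro v e he
    have h := h1 v e e
    rw [hPWW e he e he, zero_lie, add_zero, hPsymm e v] at h
    have h2 : (2 : k) • ⁅P v e, e⁆ = 0 := by
      rw [two_smul]; exact h
    rcases smul_eq_zero.mp h2 with h | h
    · exact absurd h two_ne_zero
    · exact h
  have key : ∀ v : V,
      (∃ a : k, P v e0 = a • E) ∧ P v e1 = bas.repr (P v e1) 1 • H ∧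
      (∃ c : k, P v e2 = c • F) := by
    intro v
    refine ⟨?_, ?_, ?_⟩
    · have hd := hdecomp (P v e0)
      have hb := hself v e0 he0
      rw [hd, br0] at hb
      obtain ⟨hb', hc', -⟩ :=
        hind (2 * bas.repr (P v e0) 1) (bas.repr (P v e0) 2) 0 (by simpa using hb)
      rw [htwo _ hb', hc', zero_smul, zero_smul, add_zero, add_zero] at hd
      exact ⟨_, hd⟩
    · have hd := hdecomp (P v e1)
      have hb := hself v e1 he1
      rw [hd, br1] at hb
      obtain ⟨ha', -, hc'⟩ :=
        hind (2 * bas.repr (P v e1) 0) 0 (bas.repr (P v e1) 2) (by simpa using hb)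
      rw [htwo _ ha', hc', zero_smul, zero_smul, zero_add, add_zero] at hd
      exact hd
    · have hd := hdecomp (P v e2)
      have hb := hself v e2 he2
      rw [hd, br2] at hb
      obtain ⟨-, ha', hb'⟩ :=
        hind 0 (2 * bas.repr (P v e2) 0) ((-2) * bas.repr (P v e2) 1) (by simpa using hb)
      have hb0 : bas.repr (P v e2) 1 = 0 := by
        have h2 : 2 * bas.repr (P v e2) 1 = 0 := by linear_combination -hb'
        exact htwo _ h2
      rw [htwo _ ha', hb0, zero_smul, zero_smul, zero_add, zero_add] at hd
      exact ⟨_, hd⟩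
  refine ⟨(bas.coord 1).comp (P.flip e1), ?_⟩
  intro v
  obtain ⟨⟨a, ha⟩, hBv, ⟨c, hc⟩⟩ := key v
  have hγ : ((bas.coord 1).comp (P.flip e1)) v = bas.repr (P v e1) 1 := rfl
  rw [hγ]
  generalize hgen : bas.repr (P v e1) 1 = b at hBv ⊢
  have cross01 : a = -b := by
    have h := h1 v e0 e1
    rw [hPWW e0 he0 e1 he1, zero_lie, add_zero, hPsymm e1 v] at h
    rw [ha, hBv, smul_lie, smul_lie, hEe1, hHe0, smul_smul, smul_smul] at h
    have h' : (a * 2 + b * 2) • e0 + (0 : k) • e1 + (0 : k) • e2 = 0 := by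
      rw [add_smul]; simpa using h
    obtain ⟨h0, -, -⟩ := hind _ _ _ h'
    linear_combination h0 / 2
  have cross12 : c = 2 * b := by
    have h := h1 v e1 e2
    rw [hPWW e1 he1 e2 he2, zero_lie, add_zero, hPsymm e2 v] at h
    rw [hBv, hc, smul_lie, smul_lie, hHe2, hFe1, smul_smul] at h
    have h' : (0 : k) • e0 + (0 : k) • e1 + (b * (-2) + c) • e2 = 0 := by
      rw [add_smul]; simpa using h
    obtain ⟨-, -, h2'⟩ := hind _ _ _ h'
    linear_combination h2'
  refine ⟨?_, ?_, ?_⟩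
  · rw [ha, cross01]
  · exact hBv
  · rw [hc, cross12]
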